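/- Assume ∫_{[0,1]^d} Ψ(x) dx = 0 and let β := ∫_{[0,1]^d} r(x)·Ψ(x) dx. For n ≥ 3 set ρ_n := √(n/ln n) and define the truncated estimator β̂ := (1/n)·Σ_{i=1}^n Y_i²·Ψ(X_i)·1_{{|Y_i²·Ψ(X_i)| ≤ ρ_n}}. Then, with M := 8·(E[U⁴]·‖f‖_∞⁴ + E[V⁴])·∫_{[0,1]^d} Ψ(x)² dx, one has E[(β̂ − β)²] ≤ (M + M²)·(ln n)/n. (This is the second inequality of Lemma 2 of the paper under assumption set H1, stated for a general bounded coefficient function Ψ with zero integral.) -/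

import Mathlib

open MeasureTheory ProbabilityTheory

lemma quartic_bound (a b c F p : ℝ) (ha : |a| ≤ F) :
    ((a*b+c)^2 * p)^2 ≤ 8*(F^4*b^4 + c^4)*p^2 := by
  have hF : 0 ≤ F := (abs_nonneg a).trans ha
  have h1 : a^2 ≤ F^2 := by nlinarith [neg_abs_le a, le_abs_self a]
  have h1' : a^4 ≤ F^4 := by nlinarith [sq_nonneg a, sq_nonneg F]
  have h2 : a^4*b^4 ≤ F^4*b^4 :=
    mul_le_mul_of_nonneg_right h1' (by positivity)
  have h3 : (a*b+c)^4 ≤ 8*(a^4*b^4 + c^4) := by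
    nlinarith [sq_nonneg (a*b - c), sq_nonneg (a*b + c), sq_nonneg ((a*b)^2 - c^2),
      sq_nonneg ((a*b)^2 + c^2)]
  calc ((a*b+c)^2*p)^2 = (a*b+c)^4 * p^2 := by ring
  _ ≤ 8*(F^4*b^4+c^4)*p^2 := by nlinarith [sq_nonneg p]

lemma one_le_log_of_three_le (n : ℕ) (hn : 3 ≤ n) : 1 ≤ Real.log n := by
  have h3 : (3:ℝ) ≤ n := by exact_mod_cast hn
  have : Real.exp 1 ≤ 3 := by
    have := Real.exp_one_lt_d9
    linarith
  calc (1:ℝ) ≤ Real.log 3 := by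
        rw [Real.le_log_iff_exp_le (by norm_num)]; exact this
  _ ≤ Real.log n := Real.log_le_log (by norm_num) h3


/-- second inequality of Lemma 2 of the paper, assumption set H1.
If `∫ Ψ = 0`, `β = ∫ r Ψ`, `ρₙ = √(n / ln n)` and
`β̂ = (1/n) Σᵢ Yᵢ² Ψ(Xᵢ) 1_{|Yᵢ² Ψ(Xᵢ)| ≤ ρₙ}`, then with
`M = 8 (E[U⁴] ‖f‖_∞⁴ + E[V⁴]) ∫ Ψ²` one has `E[(β̂ − β)²] ≤ (M + M²) (ln n)/n`. -/
theorem truncated_coefficient_MSE_H1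
    {Ω : Type*} [MeasurableSpace Ω] (P : Measure Ω) [IsProbabilityMeasure P]
    (d : ℕ) (hd : 1 ≤ d)
    (X : Ω → (Fin d → ℝ)) (U V : Ω → ℝ)
    (hXm : Measurable X) (hUm : Measurable U) (hVm : Measurable V)
    -- X is uniformly distributed on the cube [0,1]^d
    (hXlaw : Measure.map X P = volume.restrict (Set.Icc (0 : Fin d → ℝ) 1))
    -- E[U⁴] < ∞ and E[V⁴] < ∞
    (hU4 : Integrable (fun ω => (U ω) ^ 4) P)
    (hV4 : Integrable (fun ω => (V ω) ^ 4) P)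
    -- X, U, V mutually independent
    (hXU : IndepFun X U P)
    (hXUV : IndepFun (fun ω => (X ω, U ω)) V P)
    -- f bounded measurable on the cube, r = f²
    (f : (Fin d → ℝ) → ℝ) (hfm : Measurable f)
    (Cf : ℝ) (hf : ∀ x ∈ Set.Icc (0 : Fin d → ℝ) 1, |f x| ≤ Cf)
    (r : (Fin d → ℝ) → ℝ) (hr : ∀ x, r x = (f x) ^ 2)
    -- E[U²] = 1 and (E[U] = 0 or E[V] = 0)
    (hU2int : Integrable (fun ω => (U ω) ^ 2) P)
    (hU2 : ∫ ω, (U ω) ^ 2 ∂P = 1)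
    (hcent : (∫ ω, U ω ∂P = 0) ∨ (∫ ω, V ω ∂P = 0))
    -- the i.i.d. copies (Xᵢ, Uᵢ, Vᵢ), i = 1,…,n, of (X, U, V)
    (n : ℕ) (hn : 3 ≤ n)
    (Xs : Fin n → Ω → (Fin d → ℝ)) (Us Vs : Fin n → Ω → ℝ)
    (hXsm : ∀ i, Measurable (Xs i)) (hUsm : ∀ i, Measurable (Us i))
    (hVsm : ∀ i, Measurable (Vs i))
    (hiid : iIndepFun
      (fun i ω => (Xs i ω, Us i ω, Vs i ω)) P)
    (hident : ∀ i, IdentDistrib (fun ω => (Xs i ω, Us i ω, Vs i ω))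
      (fun ω => (X ω, U ω, V ω)) P P)
    -- Ψ bounded measurable on the cube with zero integral
    (Ψ : (Fin d → ℝ) → ℝ) (hΨm : Measurable Ψ)
    (CΨ : ℝ) (hΨ : ∀ x ∈ Set.Icc (0 : Fin d → ℝ) 1, |Ψ x| ≤ CΨ)
    (hΨ0 : ∫ x in Set.Icc (0 : Fin d → ℝ) 1, Ψ x = 0)
    -- the constant M and the truncation level ρₙ
    (M : ℝ)
    (hM : M = 8 * ((∫ ω, (U ω) ^ 4 ∂P)
                      * (⨆ x : (Set.Icc (0 : Fin d → ℝ) 1), |f x.1|) ^ 4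
                    + ∫ ω, (V ω) ^ 4 ∂P)
              * ∫ x in Set.Icc (0 : Fin d → ℝ) 1, (Ψ x) ^ 2)
    (ρ : ℝ) (hρ : ρ = Real.sqrt ((n : ℝ) / Real.log n)) :
    ∫ ω, ((1 / (n : ℝ)) * (∑ i,
            if |(f (Xs i ω) * Us i ω + Vs i ω) ^ 2 * Ψ (Xs i ω)| ≤ ρ
              then (f (Xs i ω) * Us i ω + Vs i ω) ^ 2 * Ψ (Xs i ω) else 0)
          - ∫ x in Set.Icc (0 : Fin d → ℝ) 1, r x * Ψ x) ^ 2 ∂P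
      ≤ (M + M ^ 2) * Real.log n / n := by
  -- basic numerical facts
  have hl1 : (1:ℝ) ≤ Real.log n := one_le_log_of_three_le n hn
  have hl0 : (0:ℝ) < Real.log n := lt_of_lt_of_le one_pos hl1
  have hn0 : (0:ℝ) < n := by positivity
  have hρpos : 0 < ρ := by
    rw [hρ]; exact Real.sqrt_pos.2 (div_pos hn0 hl0)
  have hρsq : ρ^2 = (n:ℝ) / Real.log n := by
    rw [hρ, Real.sq_sqrt (le_of_lt (div_pos hn0 hl0))]
  -- the cube
  set Icc1 : Set (Fin d → ℝ) := Set.Icc (0 : Fin d → ℝ) 1 with hIcc1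
  have hIccMeas : MeasurableSet Icc1 := measurableSet_Icc
  -- sup norm of f
  set F : ℝ := (⨆ x : Icc1, |f x.1|) with hFdef
  have hbdd : BddAbove (Set.range fun x : Icc1 => |f x.1|) :=
    ⟨Cf, by rintro y ⟨x, rfl⟩; exact hf x.1 x.2⟩
  have hmem0 : (0 : Fin d → ℝ) ∈ Icc1 := Set.mem_Icc.2 ⟨le_rfl, zero_le_one⟩
  have hFle : ∀ x ∈ Icc1, |f x| ≤ F := fun x hx => le_ciSup hbdd (⟨x, hx⟩ : Icc1)
  have hF0 : 0 ≤ F := le_trans (abs_nonneg _) (hFle 0 hmem0)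
  have hCΨ0 : 0 ≤ CΨ := le_trans (abs_nonneg _) (hΨ 0 hmem0)
  -- X lands in the cube a.s.
  have hXae : ∀ᵐ ω ∂P, X ω ∈ Icc1 := by
    have h1 : P (X ⁻¹' Icc1) = 1 := by
      rw [← Measure.map_apply hXm hIccMeas, hXlaw, Measure.restrict_apply hIccMeas,
        Set.inter_self, Real.volume_Icc_pi]
      simp
    have := prob_compl_eq_zero_iff (hXm hIccMeas) |>.2 h1
    exact (ae_iff).2 (by simpa [Set.preimage, Set.compl_setOf] using this)
  -- the key functions
  set g : ((Fin d → ℝ) × ℝ × ℝ) → ℝ :=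
    fun p => (f p.1 * p.2.1 + p.2.2) ^ 2 * Ψ p.1 with hgdef
  have hgm : Measurable g := by
    apply Measurable.mul
    · exact (((hfm.comp measurable_fst).mul (measurable_fst.comp measurable_snd)).add
        (measurable_snd.comp measurable_snd)).pow_const 2
    · exact hΨm.comp measurable_fst
  set ψ : ((Fin d → ℝ) × ℝ × ℝ) → ℝ :=
    fun p => if |g p| ≤ ρ then g p else 0 with hψdef
  have hψm : Measurable ψ :=
    Measurable.ite (measurableSet_le hgm.abs measurable_const) hgm measurable_const
  set Z : Ω → ℝ := fun ω => g (X ω, U ω, V ω) with hZdef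
  set T : Ω → ℝ := fun ω => ψ (X ω, U ω, V ω) with hTdef
  set W : Fin n → Ω → ((Fin d → ℝ) × ℝ × ℝ) := fun i ω => (Xs i ω, Us i ω, Vs i ω) with hWdef
  set Ti : Fin n → Ω → ℝ := fun i ω => ψ (W i ω) with hTidef
  have hW0m : Measurable (fun ω => (X ω, U ω, V ω)) := hXm.prodMk (hUm.prodMk hVm)
  have hZm : Measurable Z := hgm.comp hW0m
  have hTm : Measurable T := hψm.comp hW0m
  have hTabs : ∀ ω, |T ω| ≤ ρ := by
    intro ω
    simp only [hTdef, hψdef]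
    split
    · assumption
    · simpa using le_of_lt hρpos
  have hidT : ∀ i, IdentDistrib (Ti i) T P P := fun i => (hident i).comp hψm
  have hidZ : ∀ i, IdentDistrib (fun ω => g (W i ω)) Z P P := fun i => (hident i).comp hgm
  have hiidT : iIndepFun Ti P :=
    hiid.comp (fun _ => ψ) (fun _ => hψm)
  -- integrability of Ψ(X)^2 and pushforward identities
  have hΨXm : Measurable (fun ω => Ψ (X ω)) := hΨm.comp hXm
  have hΨX2int : Integrable (fun ω => (Ψ (X ω))^2) P := by
    refine (memLp_one_iff_integrable.1 (MemLp.of_bound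
      ((hΨXm.pow_const 2).aestronglyMeasurable) (CΨ^2) ?_))
    filter_upwards [hXae] with ω hω
    have := hΨ _ hω
    rw [Real.norm_eq_abs, abs_pow]
    exact pow_le_pow_left₀ (abs_nonneg _) this 2
  have hmapΨ2 : ∫ ω, (Ψ (X ω))^2 ∂P = ∫ x in Icc1, (Ψ x)^2 := by
    rw [← integral_map hXm.aemeasurable ((hΨm.pow_const 2).aestronglyMeasurable), hXlaw]
  have hmapΨ : ∫ ω, Ψ (X ω) ∂P = 0 := by
    rw [← hΨ0, ← integral_map hXm.aemeasurable hΨm.aestronglyMeasurable, hXlaw]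
  -- integrability of U, V, V²
  have hUmem2 : MemLp U 2 P := (memLp_two_iff_integrable_sq hUm.aestronglyMeasurable).2
    (by simpa [sq] using hU2int)
  have hUint : Integrable U P := hUmem2.integrable one_le_two
  have hV2int : Integrable (fun ω => (V ω)^2) P := by
    refine Integrable.mono' (g := fun ω => 1 + (V ω)^4) ((integrable_const 1).add hV4)
      ((hVm.pow_const 2).aestronglyMeasurable) (ae_of_all _ fun ω => ?_)
    rw [Real.norm_eq_abs, abs_of_nonneg (sq_nonneg _)]
    show V ω^2 ≤ 1 + (V ω)^4
    nlinarith [sq_nonneg ((V ω)^2 - 1)]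
  have hVmem2 : MemLp V 2 P := (memLp_two_iff_integrable_sq hVm.aestronglyMeasurable).2
    (by simpa [sq] using hV2int)
  have hVint : Integrable V P := hVmem2.integrable one_le_two
  -- independence facts
  have hXV : IndepFun X V P := hXUV.comp measurable_fst measurable_id
  have hindΨ2U4 : IndepFun (fun ω => (Ψ (X ω))^2) (fun ω => (U ω)^4) P :=
    hXU.comp (hΨm.pow_const 2) (measurable_id.pow_const 4)
  have hindΨ2V4 : IndepFun (fun ω => (Ψ (X ω))^2) (fun ω => (V ω)^4) P :=
    hXV.comp (hΨm.pow_const 2) (measurable_id.pow_const 4)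
  have hIntΨ2U4 : Integrable (fun ω => (Ψ (X ω))^2 * (U ω)^4) P :=
    hindΨ2U4.integrable_mul hΨX2int hU4
  have hIntΨ2V4 : Integrable (fun ω => (Ψ (X ω))^2 * (V ω)^4) P :=
    hindΨ2V4.integrable_mul hΨX2int hV4
  have hEΨ2U4 : ∫ ω, (Ψ (X ω))^2 * (U ω)^4 ∂P
      = (∫ x in Icc1, (Ψ x)^2) * ∫ ω, (U ω)^4 ∂P := by
    rw [← hmapΨ2]
    exact hindΨ2U4.integral_mul_eq_mul_integral hΨX2int.aestronglyMeasurable hU4.aestronglyMeasurable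
  have hEΨ2V4 : ∫ ω, (Ψ (X ω))^2 * (V ω)^4 ∂P
      = (∫ x in Icc1, (Ψ x)^2) * ∫ ω, (V ω)^4 ∂P := by
    rw [← hmapΨ2]
    exact hindΨ2V4.integral_mul_eq_mul_integral hΨX2int.aestronglyMeasurable hV4.aestronglyMeasurable
  -- the dominating function for Z²
  set Bnd : Ω → ℝ := fun ω => 8*(F^4 * (U ω)^4 + (V ω)^4) * (Ψ (X ω))^2 with hBnddef
  have hBndInt : Integrable Bnd P := by
    have h1 : Integrable (fun ω => 8*F^4*((Ψ (X ω))^2 * (U ω)^4)) P := hIntΨ2U4.const_mul _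
    have h2 : Integrable (fun ω => 8*((Ψ (X ω))^2 * (V ω)^4)) P := hIntΨ2V4.const_mul _
    exact (h1.add h2).congr (ae_of_all _ fun ω => by simp only [hBnddef, Pi.add_apply]; ring)
  have hEBnd : ∫ ω, Bnd ω ∂P = M := by
    have : ∫ ω, Bnd ω ∂P
        = 8*F^4*∫ ω, ((Ψ (X ω))^2 * (U ω)^4) ∂P + 8*∫ ω, ((Ψ (X ω))^2 * (V ω)^4) ∂P := by
      rw [← integral_const_mul, ← integral_const_mul, ← integral_add
        (hIntΨ2U4.const_mul _) (hIntΨ2V4.const_mul _)]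
      exact integral_congr_ae (ae_of_all _ fun ω => by simp only [hBnddef]; ring)
    rw [this, hEΨ2U4, hEΨ2V4, hM]
    ring
  have hZsqBnd : ∀ᵐ ω ∂P, (Z ω)^2 ≤ Bnd ω := by
    filter_upwards [hXae] with ω hω
    have := quartic_bound (f (X ω)) (U ω) (V ω) F (Ψ (X ω)) (hFle _ hω)
    simpa only [hZdef, hBnddef, hgdef] using this
  have hZsqInt : Integrable (fun ω => (Z ω)^2) P := by
    refine Integrable.mono' hBndInt ((hZm.pow_const 2).aestronglyMeasurable) ?_
    filter_upwards [hZsqBnd] with ω hω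
    rw [Real.norm_eq_abs, abs_of_nonneg (sq_nonneg _)]; exact hω
  have hZ2leM : ∫ ω, (Z ω)^2 ∂P ≤ M := by
    rw [← hEBnd]; exact integral_mono_ae hZsqInt hBndInt hZsqBnd
  have hM0 : 0 ≤ M := le_trans (integral_nonneg fun ω => sq_nonneg _) hZ2leM
  have hZmem2 : MemLp Z 2 P :=
    (memLp_two_iff_integrable_sq hZm.aestronglyMeasurable).2
      (by simpa [sq] using hZsqInt)
  have hZint : Integrable Z P := hZmem2.integrable one_le_two
  -- E[Z] = β
  set β : ℝ := ∫ x in Icc1, r x * Ψ x with hβdef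
  have hIntfΨ2 : Integrable (fun ω => f (X ω)^2 * Ψ (X ω)) P := by
    refine memLp_one_iff_integrable.1 (MemLp.of_bound
      (((hfm.pow_const 2).mul hΨm).comp hXm).aestronglyMeasurable (F^2*CΨ) ?_)
    filter_upwards [hXae] with ω hω
    rw [Real.norm_eq_abs, abs_mul, abs_pow]
    exact mul_le_mul (pow_le_pow_left₀ (abs_nonneg _) (hFle _ hω) 2) (hΨ _ hω)
      (abs_nonneg _) (by positivity)
  have hIntfΨ : Integrable (fun ω => f (X ω) * Ψ (X ω)) P := by
    refine memLp_one_iff_integrable.1 (MemLp.of_bound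
      ((hfm.mul hΨm).comp hXm).aestronglyMeasurable (F*CΨ) ?_)
    filter_upwards [hXae] with ω hω
    rw [Real.norm_eq_abs, abs_mul]
    exact mul_le_mul (hFle _ hω) (hΨ _ hω) (abs_nonneg _) hF0
  have hΨXint : Integrable (fun ω => Ψ (X ω)) P := by
    refine memLp_one_iff_integrable.1 (MemLp.of_bound hΨXm.aestronglyMeasurable CΨ ?_)
    filter_upwards [hXae] with ω hω
    rw [Real.norm_eq_abs]; exact hΨ _ hω
  have hindA1 : IndepFun (fun ω => f (X ω)^2 * Ψ (X ω)) (fun ω => (U ω)^2) P :=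
    hXU.comp ((hfm.pow_const 2).mul hΨm) (measurable_id.pow_const 2)
  have hindfΨU : IndepFun (fun ω => f (X ω) * Ψ (X ω)) U P :=
    hXU.comp (hfm.mul hΨm) measurable_id
  have hIntfΨU : Integrable (fun ω => f (X ω) * Ψ (X ω) * U ω) P :=
    hindfΨU.integrable_mul hIntfΨ hUint
  have hindA2 : IndepFun (fun ω => f (X ω) * Ψ (X ω) * U ω) V P :=
    hXUV.comp (((hfm.comp measurable_fst).mul (hΨm.comp measurable_fst)).mul
      measurable_snd) measurable_id
  have hindA3 : IndepFun (fun ω => Ψ (X ω)) (fun ω => (V ω)^2) P :=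
    hXV.comp hΨm (measurable_id.pow_const 2)
  have hIntA1 : Integrable (fun ω => f (X ω)^2 * Ψ (X ω) * (U ω)^2) P :=
    hindA1.integrable_mul hIntfΨ2 hU2int
  have hIntA2 : Integrable (fun ω => f (X ω) * Ψ (X ω) * U ω * V ω) P :=
    hindA2.integrable_mul hIntfΨU hVint
  have hIntA3 : Integrable (fun ω => Ψ (X ω) * (V ω)^2) P :=
    hindA3.integrable_mul hΨXint hV2int
  have hEA1 : ∫ ω, f (X ω)^2 * Ψ (X ω) * (U ω)^2 ∂P = β := by
    have h := hindA1.integral_fun_mul_eq_mul_integral hIntfΨ2.aestronglyMeasurable hU2int.aestronglyMeasurable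
    have hmap : ∫ ω, f (X ω)^2 * Ψ (X ω) ∂P = β := by
      rw [← integral_map hXm.aemeasurable (f := fun x => f x ^ 2 * Ψ x)
        (by fun_prop), hXlaw]
      exact integral_congr_ae (ae_of_all _ fun x => by simp only [hr])
    calc ∫ ω, f (X ω)^2 * Ψ (X ω) * (U ω)^2 ∂P
        = (∫ ω, f (X ω)^2 * Ψ (X ω) ∂P) * ∫ ω, (U ω)^2 ∂P := h
      _ = β := by rw [hmap, hU2, mul_one]
  have hEA2 : ∫ ω, f (X ω) * Ψ (X ω) * U ω * V ω ∂P = 0 := by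
    have h := hindA2.integral_mul_eq_mul_integral hIntfΨU.aestronglyMeasurable hVint.aestronglyMeasurable
    rcases hcent with hU0 | hV0
    · have h2 := hindfΨU.integral_mul_eq_mul_integral hIntfΨ.aestronglyMeasurable hUint.aestronglyMeasurable
      calc ∫ ω, f (X ω) * Ψ (X ω) * U ω * V ω ∂P
          = (∫ ω, f (X ω) * Ψ (X ω) * U ω ∂P) * ∫ ω, V ω ∂P := h
        _ = 0 := by
            have : ∫ ω, f (X ω) * Ψ (X ω) * U ω ∂P
                = (∫ ω, f (X ω) * Ψ (X ω) ∂P) * ∫ ω, U ω ∂P := h2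
            rw [this, hU0, mul_zero, zero_mul]
    · calc ∫ ω, f (X ω) * Ψ (X ω) * U ω * V ω ∂P
          = (∫ ω, f (X ω) * Ψ (X ω) * U ω ∂P) * ∫ ω, V ω ∂P := h
        _ = 0 := by rw [hV0, mul_zero]
  have hEA3 : ∫ ω, Ψ (X ω) * (V ω)^2 ∂P = 0 := by
    have h := hindA3.integral_mul_eq_mul_integral hΨXint.aestronglyMeasurable hV2int.aestronglyMeasurable
    calc ∫ ω, Ψ (X ω) * (V ω)^2 ∂P
        = (∫ ω, Ψ (X ω) ∂P) * ∫ ω, (V ω)^2 ∂P := h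
      _ = 0 := by rw [hmapΨ, zero_mul]
  have hEZ : ∫ ω, Z ω ∂P = β := by
    have hsplit : ∫ ω, Z ω ∂P
        = ∫ ω, (f (X ω)^2 * Ψ (X ω) * (U ω)^2
            + (2 * (f (X ω) * Ψ (X ω) * U ω * V ω) + Ψ (X ω) * (V ω)^2)) ∂P :=
      integral_congr_ae (ae_of_all _ fun ω => by simp only [hZdef, hgdef]; ring)
    have hI2' : Integrable (fun ω => 2 * (f (X ω) * Ψ (X ω) * U ω * V ω)) P :=
      hIntA2.const_mul 2
    have hI23 : Integrable (fun ω => 2 * (f (X ω) * Ψ (X ω) * U ω * V ω)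
        + Ψ (X ω) * (V ω)^2) P := hI2'.add hIntA3
    rw [hsplit, integral_add hIntA1 hI23, integral_add hI2' hIntA3,
      integral_const_mul, hEA1, hEA2, hEA3]
    ring
  -- T: truncated variable
  have hTmem2 : MemLp T 2 P :=
    MemLp.of_bound hTm.aestronglyMeasurable ρ (ae_of_all _ fun ω => by
      rw [Real.norm_eq_abs]; exact hTabs ω)
  have hTint : Integrable T P := hTmem2.integrable one_le_two
  have hT2int : Integrable (fun ω => (T ω)^2) P :=
    (memLp_two_iff_integrable_sq hTm.aestronglyMeasurable).1 hTmem2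
  have hTsq_le : ∀ ω, (T ω)^2 ≤ (Z ω)^2 := by
    intro ω
    simp only [hTdef, hψdef]
    split
    · exact le_rfl
    · simpa using sq_nonneg (Z ω)
  have hET2leM : ∫ ω, (T ω)^2 ∂P ≤ M :=
    le_trans (integral_mono hT2int hZsqInt hTsq_le) hZ2leM
  have hVarTleM : variance T P ≤ M :=
    le_trans (variance_le_expectation_sq hTm.aestronglyMeasurable) hET2leM
  -- bias bound
  set μT : ℝ := ∫ ω, T ω ∂P with hμTdef
  have hbias : |μT - β| ≤ M / ρ := by
    have heq : μT - β = ∫ ω, (T ω - Z ω) ∂P := by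
      rw [integral_sub hTint hZint, hEZ]
    have hptw : ∀ ω, |T ω - Z ω| ≤ (Z ω)^2 / ρ := by
      intro ω
      simp only [hTdef, hψdef]
      split
      · next h =>
        simp only [hZdef, sub_self, abs_zero]
        positivity
      · next h =>
        push_neg at h
        rw [zero_sub, abs_neg]
        rw [le_div_iff₀ hρpos]
        calc |Z ω| * ρ ≤ |Z ω| * |Z ω| :=
              mul_le_mul_of_nonneg_left (le_of_lt h) (abs_nonneg _)
          _ = (Z ω)^2 := by rw [← abs_mul, ← sq, abs_of_nonneg (sq_nonneg _)]
    calc |μT - β| = |∫ ω, (T ω - Z ω) ∂P| := by rw [heq]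
      _ ≤ ∫ ω, |T ω - Z ω| ∂P := by
          simpa [Real.norm_eq_abs] using
            norm_integral_le_integral_norm (μ := P) (f := fun ω => T ω - Z ω)
      _ ≤ ∫ ω, (Z ω)^2 / ρ ∂P :=
          integral_mono (hTint.sub hZint).abs (hZsqInt.div_const ρ) hptw
      _ = (∫ ω, (Z ω)^2 ∂P) / ρ := integral_div ρ _
      _ ≤ M / ρ := by
          exact (div_le_div_iff_of_pos_right hρpos).2 hZ2leM
  have hbias2 : (μT - β)^2 ≤ M^2 * Real.log n / n := by
    have h1 : (μT - β)^2 ≤ (M/ρ)^2 := by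
      rw [← sq_abs (μT - β)]
      exact pow_le_pow_left₀ (abs_nonneg _) hbias 2
    have h2 : (M/ρ)^2 = M^2 * Real.log n / n := by
      rw [div_pow, hρsq]
      field_simp
    linarith
  -- per-sample facts
  have hTi2 : ∀ i, MemLp (Ti i) 2 P := fun i => (hidT i).symm.memLp_snd hTmem2
  have hTiint : ∀ i, Integrable (Ti i) P := fun i => (hTi2 i).integrable one_le_two
  have hETi : ∀ i, ∫ ω, Ti i ω ∂P = μT := fun i => (hidT i).integral_eq
  have hVarTi : ∀ i, variance (Ti i) P = variance T P := fun i => (hidT i).variance_eq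
  have hvarsum : variance (∑ i, Ti i) P = n * variance T P := by
    rw [IndepFun.variance_sum (fun i _ => hTi2 i)
      (fun i _ j _ hij => hiidT.indepFun hij)]
    simp [hVarTi, Finset.sum_const, Finset.card_univ, nsmul_eq_mul]
  -- the estimator
  set S : Ω → ℝ := fun ω => (1/(n:ℝ)) * ∑ i, Ti i ω with hSdef
  have hSeq : S = (1/(n:ℝ)) • (∑ i, Ti i) := by
    funext ω
    simp [hSdef, Finset.sum_apply]
  have hsummem : MemLp (∑ i, Ti i) 2 P := memLp_finset_sum' _ fun i _ => hTi2 i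
  have hSmem2 : MemLp S 2 P := by
    rw [hSeq]; exact hsummem.const_smul _
  have hSint : Integrable S P := hSmem2.integrable one_le_two
  have hES : ∫ ω, S ω ∂P = μT := by
    have hne : (n:ℝ) ≠ 0 := ne_of_gt hn0
    calc ∫ ω, S ω ∂P = (1/(n:ℝ)) * ∫ ω, ∑ i, Ti i ω ∂P := integral_const_mul _ _
      _ = (1/(n:ℝ)) * ∑ i, ∫ ω, Ti i ω ∂P := by
          rw [integral_finset_sum _ fun i _ => hTiint i]
      _ = (1/(n:ℝ)) * ((n:ℝ) * μT) := by
          simp [hETi, Finset.sum_const, Finset.card_univ, nsmul_eq_mul]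
      _ = μT := by field_simp
  have hvarS : variance S P ≤ M / n := by
    have hne : (n:ℝ) ≠ 0 := ne_of_gt hn0
    have h1 : variance S P = (1/(n:ℝ))^2 * ((n:ℝ) * variance T P) := by
      rw [hSeq, variance_smul, hvarsum]
    have h2 : (1/(n:ℝ))^2 * ((n:ℝ) * variance T P) = variance T P / n := by
      field_simp
    rw [h1, h2]
    exact div_le_div_of_nonneg_right hVarTleM (le_of_lt hn0)
  -- decomposition of the MSE
  have hDint : Integrable (fun ω => S ω - μT) P := hSint.sub (integrable_const μT)
  have hD2 : MemLp (fun ω => S ω - μT) 2 P := hSmem2.sub (memLp_const μT)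
  have hD2int : Integrable (fun ω => (S ω - μT)^2) P :=
    (memLp_two_iff_integrable_sq (hSmem2.aestronglyMeasurable.sub
      aestronglyMeasurable_const)).1 hD2
  have hED : ∫ ω, (S ω - μT) ∂P = 0 := by
    rw [integral_sub hSint (integrable_const μT), hES, integral_const]
    simp
  have hvarS_eq : variance S P = ∫ ω, (S ω - μT)^2 ∂P := by
    rw [variance_eq_integral hSmem2.aestronglyMeasurable.aemeasurable, hES]
  have hkey : ∫ ω, (S ω - β)^2 ∂P = variance S P + (μT - β)^2 := by
    have hI2 : Integrable (fun ω => (2*(μT - β))*(S ω - μT) + (μT - β)^2) P :=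
      (hDint.const_mul _).add (integrable_const _)
    calc ∫ ω, (S ω - β)^2 ∂P
        = ∫ ω, ((S ω - μT)^2 + ((2*(μT - β))*(S ω - μT) + (μT - β)^2)) ∂P :=
          integral_congr_ae (ae_of_all _ fun ω => by ring)
      _ = ∫ ω, (S ω - μT)^2 ∂P
          + ∫ ω, ((2*(μT - β))*(S ω - μT) + (μT - β)^2) ∂P := integral_add hD2int hI2
      _ = ∫ ω, (S ω - μT)^2 ∂P
          + ((2*(μT - β)) * ∫ ω, (S ω - μT) ∂P + (μT - β)^2) := by
          rw [integral_add (hDint.const_mul _) (integrable_const _), integral_const_mul,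
            integral_const]
          simp
      _ = variance S P + (μT - β)^2 := by rw [hED, hvarS_eq]; ring
  -- final assembly
  have hfinal : ∫ ω, (S ω - β)^2 ∂P ≤ (M + M ^ 2) * Real.log n / n := by
    rw [hkey]
    have h1 : variance S P ≤ M * Real.log n / n := by
      refine le_trans hvarS ?_
      rw [div_le_div_iff₀ hn0 hn0]
      calc M * (n:ℝ) = M * 1 * n := by ring
        _ ≤ M * Real.log n * n := by
            apply mul_le_mul_of_nonneg_right _ (le_of_lt hn0)
            exact mul_le_mul_of_nonneg_left hl1 hM0
    calc variance S P + (μT - β)^2 ≤ M * Real.log n / n + M^2 * Real.log n / n :=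
          add_le_add h1 hbias2
      _ = (M + M ^ 2) * Real.log n / n := by ring
  exact hfinal
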